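/- arXiv:1105.3404 — 2 statements merged into one kernel-verified Lean document; each statement's English description precedes it below -/
import Mathlib

section
/- Let (B,g_B) be a singular metric such that g_B p is nondegenerate for every p ∈ B (i.e. if g_B p u v = 0 for all v ∈ E_B then u = 0), let f : B → ℝ be any smooth function, and suppose (F,g_F) is radical-stationary. Then the warped product (M, g) = B ×_f F is radical-stationary. -/
noncomputable section

section Basic

variable {E : Type*} [NormedAddCommGroup E] [NormedSpace ℝ E]

/-- The Lie bracket of two vector fields. -/
def lieB (X Y : E → E) : E → E :=
  fun p => fderiv ℝ Y p (X p) - fderiv ℝ X p (Y p)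

/-- The Koszul form of a singular metric `g`. -/
def koszul (g : E → (E →L[ℝ] E →L[ℝ] ℝ)) (X Y Z : E → E) : E → ℝ :=
  fun p =>
    (1 / 2) * (fderiv ℝ (fun x => g x (Y x) (Z x)) p (X p)
      + fderiv ℝ (fun x => g x (Z x) (X x)) p (Y p)
      - fderiv ℝ (fun x => g x (X x) (Y x)) p (Z p)
      - g p (X p) (lieB Y Z p)
      + g p (Y p) (lieB Z X p)
      + g p (Z p) (lieB X Y p))

/-- `g` is a singular (semi-Riemannian) metric on `M`: smooth and pointwise symmetric. -/
def IsSingularMetric (M : Set E) (g : E → (E →L[ℝ] E →L[ℝ] ℝ)) : Prop :=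
  ContDiffOn ℝ (⊤ : ℕ∞) g M ∧ ∀ p ∈ M, ∀ u v : E, g p u v = g p v u

/-- `w` represents the 1-form `κ(X,Y,_)` at `p` via the metric `g`. -/
def KoszulWitness (M : Set E) (g : E → (E →L[ℝ] E →L[ℝ] ℝ)) (X Y : E → E)
    (p w : E) : Prop :=
  ∀ Z : E → E, ContDiffOn ℝ (⊤ : ℕ∞) Z M → koszul g X Y Z p = g p w (Z p)

/-- `(M,g)` is radical-stationary. -/
def RadicalStationary (M : Set E) (g : E → (E →L[ℝ] E →L[ℝ] ℝ)) : Prop :=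
  ∀ X Y : E → E, ContDiffOn ℝ (⊤ : ℕ∞) X M → ContDiffOn ℝ (⊤ : ℕ∞) Y M →
    ∀ p ∈ M, ∃ w : E, KoszulWitness M g X Y p w

/-- `(M,g)` is semi-regular: radical-stationary and every covariant contraction
`κ(X,Y,•)κ(Z,T,•)` is a (well-defined) smooth function on `M`. -/
def SemiRegular (M : Set E) (g : E → (E →L[ℝ] E →L[ℝ] ℝ)) : Prop :=
  RadicalStationary M g ∧
  ∀ X Y Z T : E → E, ContDiffOn ℝ (⊤ : ℕ∞) X M → ContDiffOn ℝ (⊤ : ℕ∞) Y M →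
    ContDiffOn ℝ (⊤ : ℕ∞) Z M → ContDiffOn ℝ (⊤ : ℕ∞) T M →
    ∃ k : E → ℝ, ContDiffOn ℝ (⊤ : ℕ∞) k M ∧
      ∀ p ∈ M, ∀ w₁ w₂ : E,
        KoszulWitness M g X Y p w₁ → KoszulWitness M g Z T p w₂ →
          k p = g p w₁ w₂

/-- The differential of `f` is radical-annihilator on `B`. -/
def DiffRadicalAnnihilator (B : Set E) (g : E → (E →L[ℝ] E →L[ℝ] ℝ))
    (f : E → ℝ) : Prop :=
  ∀ p ∈ B, ∃ w : E, ∀ z : E, fderiv ℝ f p z = g p w z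

/-- `df ∈ Ω¹_s(B)`: `df` is radical-annihilator and the 1-forms `Y ↦ (∇_X df)(Y)`,
`(∇_X df)(Y) := X(Y f) - κ(X,Y,•)(df)(•)`, are radical-annihilator. -/
def DiffInOmega1s (B : Set E) (g : E → (E →L[ℝ] E →L[ℝ] ℝ)) (f : E → ℝ) : Prop :=
  DiffRadicalAnnihilator B g f ∧
  ∀ X : E → E, ContDiffOn ℝ (⊤ : ℕ∞) X B → ∀ p ∈ B, ∃ w : E,
    ∀ Y : E → E, ContDiffOn ℝ (⊤ : ℕ∞) Y B → ∀ w₁ w₂ : E,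
      KoszulWitness B g X Y p w₁ → (∀ z : E, fderiv ℝ f p z = g p w₂ z) →
        fderiv ℝ (fun x => fderiv ℝ f x (Y x)) p (X p) - g p w₁ w₂ = g p w (Y p)

/-- The value of the Riemann curvature tensor
`R(X,Y,Z,T) = X κ(Y,Z,T) - Y κ(X,Z,T) - κ([X,Y],Z,T) + κ(X,Z,•)κ(Y,T,•) - κ(Y,Z,•)κ(X,T,•)`
at `p`, written using vectors `w₁, w₂, w₃, w₄` representing the 1-forms
`κ(X,Z,_), κ(Y,T,_), κ(Y,Z,_), κ(X,T,_)` at `p`, so that the covariant contractions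
are `g p w₁ w₂` and `g p w₃ w₄`. -/
def riemannExpr (g : E → (E →L[ℝ] E →L[ℝ] ℝ)) (X Y Z T : E → E) (p : E)
    (w₁ w₂ w₃ w₄ : E) : ℝ :=
  fderiv ℝ (koszul g Y Z T) p (X p) - fderiv ℝ (koszul g X Z T) p (Y p)
    - koszul g (lieB X Y) Z T p + g p w₁ w₂ - g p w₃ w₄

end Basic

section Warped

variable {E₁ E₂ : Type*} [NormedAddCommGroup E₁] [NormedSpace ℝ E₁]
  [NormedAddCommGroup E₂] [NormedSpace ℝ E₂]

/-- Lift a bilinear form on `E₁` to `E₁ × E₂` (acting through the first factor). -/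
def liftBilinFst (b : E₁ →L[ℝ] E₁ →L[ℝ] ℝ) :
    (E₁ × E₂) →L[ℝ] (E₁ × E₂) →L[ℝ] ℝ :=
  (((b.comp (ContinuousLinearMap.fst ℝ E₁ E₂)).flip).comp
    (ContinuousLinearMap.fst ℝ E₁ E₂)).flip

/-- Lift a bilinear form on `E₂` to `E₁ × E₂` (acting through the second factor). -/
def liftBilinSnd (b : E₂ →L[ℝ] E₂ →L[ℝ] ℝ) :
    (E₁ × E₂) →L[ℝ] (E₁ × E₂) →L[ℝ] ℝ :=
  (((b.comp (ContinuousLinearMap.snd ℝ E₁ E₂)).flip).comp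
    (ContinuousLinearMap.snd ℝ E₁ E₂)).flip

/-- The warped product metric `g = g_B + f² g_F` on `B × F ⊆ E₁ × E₂`:
`g (p,q) ((u₁,u₂),(v₁,v₂)) = g_B p u₁ v₁ + f(p)² * g_F q u₂ v₂`. -/
def warpedMetric (gB : E₁ → (E₁ →L[ℝ] E₁ →L[ℝ] ℝ))
    (gF : E₂ → (E₂ →L[ℝ] E₂ →L[ℝ] ℝ)) (f : E₁ → ℝ) :
    (E₁ × E₂) → ((E₁ × E₂) →L[ℝ] (E₁ × E₂) →L[ℝ] ℝ) :=
  fun x => liftBilinFst (gB x.1) + (f x.1) ^ 2 • liftBilinSnd (gF x.2)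

/-- The lift to `E₁ × E₂` of a vector field on the base. -/
def liftVecB (X : E₁ → E₁) : (E₁ × E₂) → (E₁ × E₂) := fun x => (X x.1, 0)

/-- The lift to `E₁ × E₂` of a vector field on the fiber. -/
def liftVecF (V : E₂ → E₂) : (E₁ × E₂) → (E₁ × E₂) := fun x => (0, V x.2)

end Warped


section Aux

variable {E : Type*} [NormedAddCommGroup E] [NormedSpace ℝ E]

lemma fderiv_metric_apply {g : E → (E →L[ℝ] E →L[ℝ] ℝ)} {g' : E →L[ℝ] E →L[ℝ] E →L[ℝ] ℝ}
    {Y Z : E → E} {p : E} (hg : HasFDerivAt g g' p)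
    (hY : DifferentiableAt ℝ Y p) (hZ : DifferentiableAt ℝ Z p) (u : E) :
    fderiv ℝ (fun x => g x (Y x) (Z x)) p u
      = g' u (Y p) (Z p) + g p (fderiv ℝ Y p u) (Z p) + g p (Y p) (fderiv ℝ Z p u) := by
  have h1 : HasFDerivAt (fun x => g x (Y x))
      ((g p).comp (fderiv ℝ Y p) + g'.flip (Y p)) p := hg.clm_apply hY.hasFDerivAt
  have h2 := h1.clm_apply hZ.hasFDerivAt
  rw [h2.fderiv]
  simp [ContinuousLinearMap.add_apply, ContinuousLinearMap.comp_apply,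
    ContinuousLinearMap.flip_apply]
  ring

lemma koszul_formula {g : E → (E →L[ℝ] E →L[ℝ] ℝ)} {g' : E →L[ℝ] E →L[ℝ] E →L[ℝ] ℝ}
    {X Y Z : E → E} {p : E} (hg : HasFDerivAt g g' p)
    (hX : DifferentiableAt ℝ X p) (hY : DifferentiableAt ℝ Y p) (hZ : DifferentiableAt ℝ Z p)
    (hs : ∀ u v, g p u v = g p v u) :
    koszul g X Y Z p = (1 / 2) * (g' (X p) (Y p) (Z p) + g' (Y p) (Z p) (X p)
      - g' (Z p) (X p) (Y p))
      + g p (fderiv ℝ Y p (X p)) (Z p) := by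
  unfold koszul lieB
  rw [fderiv_metric_apply hg hY hZ, fderiv_metric_apply hg hZ hX, fderiv_metric_apply hg hX hY]
  simp only [map_sub]
  have h1 := hs (Y p) (fderiv ℝ Z p (X p))
  have h2 := hs (Z p) (fderiv ℝ Y p (X p))
  have h3 := hs (X p) (fderiv ℝ Z p (Y p))
  have h4 := hs (Z p) (fderiv ℝ X p (Y p))
  have h5 := hs (X p) (fderiv ℝ Y p (Z p))
  have h6 := hs (Y p) (fderiv ℝ X p (Z p))
  ring_nf
  linarith

lemma exists_rep [FiniteDimensional ℝ E]
    (b : E →L[ℝ] E →L[ℝ] ℝ) (hnd : ∀ u : E, (∀ v : E, b u v = 0) → u = 0)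
    (φ : E → ℝ) (hφ : IsLinearMap ℝ φ) : ∃ w : E, ∀ z : E, φ z = b w z := by
  let T : E →ₗ[ℝ] Module.Dual ℝ E :=
    { toFun := fun w => (b w : E →ₗ[ℝ] ℝ)
      map_add' := by intro x y; ext v; simp
      map_smul' := by intro c x; ext v; simp }
  have hinj : Function.Injective T := by
    rw [← LinearMap.ker_eq_bot, LinearMap.ker_eq_bot']
    intro u hu
    exact hnd u fun v => congrFun (congrArg DFunLike.coe hu) v
  have hsurj : Function.Surjective T :=
    (LinearMap.injective_iff_surjective_of_finrank_eq_finrank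
      (Subspace.dual_finrank_eq (K := ℝ) (V := E)).symm).mp hinj
  obtain ⟨w, hw⟩ := hsurj (IsLinearMap.mk' φ hφ)
  exact ⟨w, fun z => (congrFun (congrArg DFunLike.coe hw) z).symm⟩

end Aux

section Aux2

variable {E₁ E₂ : Type*} [NormedAddCommGroup E₁] [NormedSpace ℝ E₁]
  [NormedAddCommGroup E₂] [NormedSpace ℝ E₂]

@[simp] lemma liftBilinFst_apply (b : E₁ →L[ℝ] E₁ →L[ℝ] ℝ) (u v : E₁ × E₂) :
    liftBilinFst b u v = b u.1 v.1 := rfl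

@[simp] lemma liftBilinSnd_apply (b : E₂ →L[ℝ] E₂ →L[ℝ] ℝ) (u v : E₁ × E₂) :
    liftBilinSnd b u v = b u.2 v.2 := rfl

@[simp] lemma warpedMetric_apply (gB : E₁ → (E₁ →L[ℝ] E₁ →L[ℝ] ℝ))
    (gF : E₂ → (E₂ →L[ℝ] E₂ →L[ℝ] ℝ)) (f : E₁ → ℝ) (x u v : E₁ × E₂) :
    warpedMetric gB gF f x u v = gB x.1 u.1 v.1 + (f x.1) ^ 2 * gF x.2 u.2 v.2 := rfl

def liftFstLM : (E₁ →L[ℝ] E₁ →L[ℝ] ℝ) →ₗ[ℝ] ((E₁ × E₂) →L[ℝ] (E₁ × E₂) →L[ℝ] ℝ) where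
  toFun := liftBilinFst
  map_add' x y := ContinuousLinearMap.ext fun u => ContinuousLinearMap.ext fun v => by simp
  map_smul' t x := ContinuousLinearMap.ext fun u => ContinuousLinearMap.ext fun v => by simp

def liftSndLM : (E₂ →L[ℝ] E₂ →L[ℝ] ℝ) →ₗ[ℝ] ((E₁ × E₂) →L[ℝ] (E₁ × E₂) →L[ℝ] ℝ) where
  toFun := liftBilinSnd
  map_add' x y := ContinuousLinearMap.ext fun u => ContinuousLinearMap.ext fun v => by simp
  map_smul' t x := ContinuousLinearMap.ext fun u => ContinuousLinearMap.ext fun v => by simp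

variable [FiniteDimensional ℝ E₁] [FiniteDimensional ℝ E₂]

def liftFstL : (E₁ →L[ℝ] E₁ →L[ℝ] ℝ) →L[ℝ] ((E₁ × E₂) →L[ℝ] (E₁ × E₂) →L[ℝ] ℝ) :=
  ⟨liftFstLM, LinearMap.continuous_of_finiteDimensional (𝕜 := ℝ) (E := E₁ →L[ℝ] E₁ →L[ℝ] ℝ)
    (F' := (E₁ × E₂) →L[ℝ] (E₁ × E₂) →L[ℝ] ℝ) liftFstLM⟩

def liftSndL : (E₂ →L[ℝ] E₂ →L[ℝ] ℝ) →L[ℝ] ((E₁ × E₂) →L[ℝ] (E₁ × E₂) →L[ℝ] ℝ) :=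
  ⟨liftSndLM, LinearMap.continuous_of_finiteDimensional (𝕜 := ℝ) (E := E₂ →L[ℝ] E₂ →L[ℝ] ℝ)
    (F' := (E₁ × E₂) →L[ℝ] (E₁ × E₂) →L[ℝ] ℝ) liftSndLM⟩

@[simp] lemma liftFstL_apply (b : E₁ →L[ℝ] E₁ →L[ℝ] ℝ) :
    liftFstL (E₂ := E₂) b = liftBilinFst b := rfl

@[simp] lemma liftSndL_apply (b : E₂ →L[ℝ] E₂ →L[ℝ] ℝ) :
    liftSndL (E₁ := E₁) b = liftBilinSnd b := rfl

end Aux2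

set_option maxHeartbeats 1600000 in
/-- If `g_B` is pointwise nondegenerate and `(F,g_F)` is
radical-stationary, then the warped product is radical-stationary, for any smooth
warping function. -/
theorem warpedProduct_radicalStationary_of_nondegenerate_base
    {E₁ E₂ : Type*} [NormedAddCommGroup E₁] [NormedSpace ℝ E₁] [FiniteDimensional ℝ E₁]
    [NormedAddCommGroup E₂] [NormedSpace ℝ E₂] [FiniteDimensional ℝ E₂]
    (B : Set E₁) (F : Set E₂) (hB : IsOpen B) (hF : IsOpen F)
    (gB : E₁ → (E₁ →L[ℝ] E₁ →L[ℝ] ℝ)) (gF : E₂ → (E₂ →L[ℝ] E₂ →L[ℝ] ℝ))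
    (hgB : IsSingularMetric B gB) (hgF : IsSingularMetric F gF)
    (hnd : ∀ p ∈ B, ∀ u : E₁, (∀ v : E₁, gB p u v = 0) → u = 0)
    (hrsF : RadicalStationary F gF)
    (f : E₁ → ℝ) (hf : ContDiffOn ℝ (⊤ : ℕ∞) f B) :
    RadicalStationary (B ×ˢ F) (warpedMetric gB gF f) := by
  intro X Y hX hY p hp
  rw [Set.mem_prod] at hp
  obtain ⟨hp1, hp2⟩ := hp
  have hM : IsOpen (B ×ˢ F) := hB.prod hF
  have hpM : p ∈ B ×ˢ F := Set.mem_prod.mpr ⟨hp1, hp2⟩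
  have hgBd : DifferentiableAt ℝ gB p.1 :=
    (hgB.1.contDiffAt (hB.mem_nhds hp1)).differentiableAt (by simp)
  have hgFd : DifferentiableAt ℝ gF p.2 :=
    (hgF.1.contDiffAt (hF.mem_nhds hp2)).differentiableAt (by simp)
  have hfd : DifferentiableAt ℝ f p.1 :=
    (hf.contDiffAt (hB.mem_nhds hp1)).differentiableAt (by simp)
  have hXd : DifferentiableAt ℝ X p :=
    (hX.contDiffAt (hM.mem_nhds hpM)).differentiableAt (by simp)
  have hYd : DifferentiableAt ℝ Y p :=
    (hY.contDiffAt (hM.mem_nhds hpM)).differentiableAt (by simp)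
  set a := X p with ha
  set b := Y p with hb
  set c := fderiv ℝ Y p (X p) with hc
  set gB' := fderiv ℝ gB p.1 with hgB'
  set gF' := fderiv ℝ gF p.2 with hgF'
  set f' := fderiv ℝ f p.1 with hf'
  -- symmetry of the warped metric at p
  have hsymm : ∀ u v : E₁ × E₂, warpedMetric gB gF f p u v = warpedMetric gB gF f p v u := by
    intro u v
    simp only [warpedMetric_apply]
    rw [hgB.2 p.1 hp1, hgF.2 p.2 hp2]
  -- derivative of the warped metric at p
  have hL1 : HasFDerivAt (𝕜 := ℝ) (liftFstL (E₁ := E₁) (E₂ := E₂))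
      (liftFstL (E₁ := E₁) (E₂ := E₂)) (gB p.1) := by
    exact ContinuousLinearMap.hasFDerivAt (𝕜 := ℝ) (E := E₁ →L[ℝ] E₁ →L[ℝ] ℝ)
      (F := (E₁ × E₂) →L[ℝ] (E₁ × E₂) →L[ℝ] ℝ) _
  have hL2 : HasFDerivAt (𝕜 := ℝ) (liftSndL (E₁ := E₁) (E₂ := E₂))
      (liftSndL (E₁ := E₁) (E₂ := E₂)) (gF p.2) := by
    exact ContinuousLinearMap.hasFDerivAt (𝕜 := ℝ) (E := E₂ →L[ℝ] E₂ →L[ℝ] ℝ)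
      (F := (E₁ × E₂) →L[ℝ] (E₁ × E₂) →L[ℝ] ℝ) _
  have h1 : HasFDerivAt (𝕜 := ℝ) (fun x : E₁ × E₂ => liftBilinFst (E₂ := E₂) (gB x.1))
      ((liftFstL (E₂ := E₂)).comp (gB'.comp (ContinuousLinearMap.fst ℝ E₁ E₂))) p := by
    exact HasFDerivAt.comp (𝕜 := ℝ) (g := liftFstL (E₁ := E₁) (E₂ := E₂)) p hL1
      (HasFDerivAt.comp (𝕜 := ℝ) (g := gB) p hgBd.hasFDerivAt (hasFDerivAt_fst (𝕜 := ℝ) (p := p)))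
  have h2 : HasFDerivAt (𝕜 := ℝ) (fun x : E₁ × E₂ => liftBilinSnd (E₁ := E₁) (gF x.2))
      ((liftSndL (E₁ := E₁)).comp (gF'.comp (ContinuousLinearMap.snd ℝ E₁ E₂))) p := by
    exact HasFDerivAt.comp (𝕜 := ℝ) (g := liftSndL (E₁ := E₁) (E₂ := E₂)) p hL2
      (HasFDerivAt.comp (𝕜 := ℝ) (g := gF) p hgFd.hasFDerivAt (hasFDerivAt_snd (𝕜 := ℝ) (p := p)))
  have hf1 : HasFDerivAt (fun x : E₁ × E₂ => f x.1)
      (f'.comp (ContinuousLinearMap.fst ℝ E₁ E₂)) p :=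
    hfd.hasFDerivAt.comp p hasFDerivAt_fst
  have hsq : HasFDerivAt (fun x : E₁ × E₂ => (f x.1) ^ 2)
      (f p.1 • (f'.comp (ContinuousLinearMap.fst ℝ E₁ E₂))
        + f p.1 • (f'.comp (ContinuousLinearMap.fst ℝ E₁ E₂))) p := by
    have heq : (fun x : E₁ × E₂ => (f x.1) ^ 2) = fun x : E₁ × E₂ => f x.1 * f x.1 := by
      funext x; ring
    rw [heq]
    exact hf1.mul hf1
  haveI : IsBoundedSMul ℝ (E₁ × E₂ →L[ℝ] E₁ × E₂ →L[ℝ] ℝ) :=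
    NormedSpace.toIsBoundedSMul (𝕜 := ℝ) (E := E₁ × E₂ →L[ℝ] E₁ × E₂ →L[ℝ] ℝ)
  have hG : HasFDerivAt (warpedMetric gB gF f) _ p := (h1.add (HasFDerivAt.smul (𝕜 := ℝ) (𝕜' := ℝ)
    (F := E₁ × E₂ →L[ℝ] E₁ × E₂ →L[ℝ] ℝ) (f := fun x : E₁ × E₂ => liftBilinSnd (E₁ := E₁) (gF x.2)) hsq h2) :)
  -- the witness from radical-stationarity of the fiber
  obtain ⟨w0, hw0⟩ := hrsF (fun _ => a.2) (fun _ => b.2)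
    contDiffOn_const contDiffOn_const p.2 hp2
  have hw0' : ∀ z₂ : E₂,
      (1 / 2) * (gF' a.2 b.2 z₂ + gF' b.2 z₂ a.2 - gF' z₂ a.2 b.2) = gF p.2 w0 z₂ := by
    intro z₂
    have h := hw0 (fun _ => z₂) contDiffOn_const
    rw [koszul_formula hgFd.hasFDerivAt (differentiableAt_const _)
      (differentiableAt_const _) (differentiableAt_const _) (hgF.2 p.2 hp2)] at h
    simpa using h
  -- the witness on the base from nondegeneracy
  have hφ : IsLinearMap ℝ (fun z₁ : E₁ =>
      (1 / 2) * (gB' a.1 b.1 z₁ + gB' b.1 z₁ a.1 - gB' z₁ a.1 b.1)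
        - f p.1 * f' z₁ * gF p.2 a.2 b.2 + gB p.1 c.1 z₁) := by
    constructor
    · intro x y
      simp only [map_add, ContinuousLinearMap.add_apply]
      ring
    · intro t x
      simp only [map_smul, ContinuousLinearMap.smul_apply, smul_eq_mul]
      ring
  obtain ⟨w₁, hw₁⟩ := exists_rep (gB p.1) (hnd p.1 hp1) _ hφ
  -- assemble
  by_cases hf0 : f p.1 = 0
  · refine ⟨(w₁, 0), fun Z hZ => ?_⟩
    have hZd : DifferentiableAt ℝ Z p :=
      (hZ.contDiffAt (hM.mem_nhds hpM)).differentiableAt (by simp)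
    rw [koszul_formula hG hXd hYd hZd hsymm]
    have e1 := hw₁ (Z p).1
    simp only [warpedMetric_apply, ContinuousLinearMap.add_apply,
      ContinuousLinearMap.coe_comp', Function.comp_apply, ContinuousLinearMap.smul_apply,
      ContinuousLinearMap.smulRight_apply, smul_eq_mul, liftBilinFst_apply,
      liftBilinSnd_apply, liftFstL_apply, liftSndL_apply, ContinuousLinearMap.coe_fst',
      ContinuousLinearMap.coe_snd', hf0] at e1 ⊢
    ring_nf
    ring_nf at e1
    linarith
  · refine ⟨(w₁, (f p.1)⁻¹ • ((f' a.1) • b.2 + (f' b.1) • a.2) + w0 + c.2),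
      fun Z hZ => ?_⟩
    have hZd : DifferentiableAt ℝ Z p :=
      (hZ.contDiffAt (hM.mem_nhds hpM)).differentiableAt (by simp)
    rw [koszul_formula hG hXd hYd hZd hsymm]
    have e1 := hw₁ (Z p).1
    have e2 := hw0' (Z p).2
    have e3 : gF p.2 (Z p).2 a.2 = gF p.2 a.2 (Z p).2 := hgF.2 p.2 hp2 _ _
    simp only [warpedMetric_apply, ContinuousLinearMap.add_apply,
      ContinuousLinearMap.coe_comp', Function.comp_apply, ContinuousLinearMap.smul_apply,
      ContinuousLinearMap.smulRight_apply, smul_eq_mul, liftBilinFst_apply,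
      liftBilinSnd_apply, liftFstL_apply, liftSndL_apply, ContinuousLinearMap.coe_fst',
      ContinuousLinearMap.coe_snd', map_add, map_smul] at e1 e2 e3 ⊢
    simp only [ha, hb, hc] at e1 e2 e3 ⊢
    field_simp
    linear_combination 2 * e1 + (2 * f p.1 ^ 2) * e2
      + (2 * f p.1 * f' (Y p).1) * e3

end
end

section
/- Let (B,g_B) and (F,g_F) be semi-regular singular semi-Riemannian manifolds, f : B → ℝ smooth with df ∈ Ω¹_s(B), and let (M,g) = B ×_f F be the warped product (which is semi-regular) with Riemann curvature R. For smooth vector fields X, Y, Z : B → E_B and U, V, W, Q : F → E_F, with lifts denoted by tildes, the following mixed components of the Riemann curvature vanish identically on M: R(X̃,Ỹ,Z̃,Q̃) = 0, R(X̃,Ỹ,W̃,Q̃) = 0, and R(Ũ,Ṽ,Z̃,Q̃) = 0. -/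
noncomputable section

section Aux
open Filter ContinuousLinearMap
variable {E₁ E₂ : Type*} [NormedAddCommGroup E₁] [NormedSpace ℝ E₁]
  [NormedAddCommGroup E₂] [NormedSpace ℝ E₂]

lemma warped_apply (gB : E₁ → (E₁ →L[ℝ] E₁ →L[ℝ] ℝ)) (gF : E₂ → (E₂ →L[ℝ] E₂ →L[ℝ] ℝ))
    (f : E₁ → ℝ) (x : E₁ × E₂) (a b : E₁ × E₂) :
    warpedMetric gB gF f x a b = gB x.1 a.1 b.1 + f x.1 ^ 2 * gF x.2 a.2 b.2 := rfl

lemma fderiv_comp_fst {G : Type*} [NormedAddCommGroup G] [NormedSpace ℝ G]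
    {φ : E₁ → G} {x : E₁ × E₂} (hφ : DifferentiableAt ℝ φ x.1) (v : E₁ × E₂) :
    fderiv ℝ (fun y : E₁ × E₂ => φ y.1) x v = fderiv ℝ φ x.1 v.1 := by
  show fderiv ℝ (φ ∘ Prod.fst) x v = fderiv ℝ φ x.1 v.1
  rw [(hφ.hasFDerivAt.comp x hasFDerivAt_fst).fderiv]; rfl

lemma fderiv_comp_snd {G : Type*} [NormedAddCommGroup G] [NormedSpace ℝ G]
    {ψ : E₂ → G} {x : E₁ × E₂} (hψ : DifferentiableAt ℝ ψ x.2) (v : E₁ × E₂) :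
    fderiv ℝ (fun y : E₁ × E₂ => ψ y.2) x v = fderiv ℝ ψ x.2 v.2 := by
  show fderiv ℝ (ψ ∘ Prod.snd) x v = fderiv ℝ ψ x.2 v.2
  rw [(hψ.hasFDerivAt.comp x hasFDerivAt_snd).fderiv]; rfl

lemma fderiv_mul_fst_snd {φ : E₁ → ℝ} {ψ : E₂ → ℝ} {x : E₁ × E₂}
    (hφ : DifferentiableAt ℝ φ x.1) (hψ : DifferentiableAt ℝ ψ x.2) (v : E₁ × E₂) :
    fderiv ℝ (fun y : E₁ × E₂ => φ y.1 * ψ y.2) x v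
      = fderiv ℝ φ x.1 v.1 * ψ x.2 + φ x.1 * fderiv ℝ ψ x.2 v.2 := by
  have h1 : HasFDerivAt (fun y : E₁ × E₂ => φ y.1) ((fderiv ℝ φ x.1).comp (fst ℝ E₁ E₂)) x :=
    hφ.hasFDerivAt.comp x hasFDerivAt_fst
  have h2 : HasFDerivAt (fun y : E₁ × E₂ => ψ y.2) ((fderiv ℝ ψ x.2).comp (snd ℝ E₁ E₂)) x :=
    hψ.hasFDerivAt.comp x hasFDerivAt_snd
  rw [HasFDerivAt.fderiv (f := fun y : E₁ × E₂ => φ y.1 * ψ y.2) (h1.mul h2)]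
  simp [mul_comm]
  ring

lemma fderiv_liftVecB {A : E₁ → E₁} {x : E₁ × E₂} (hA : DifferentiableAt ℝ A x.1)
    (v : E₁ × E₂) :
    fderiv ℝ (liftVecB (E₂ := E₂) A) x v = (fderiv ℝ A x.1 v.1, 0) := by
  have h1 : HasFDerivAt (fun y : E₁ × E₂ => A y.1) ((fderiv ℝ A x.1).comp (fst ℝ E₁ E₂)) x :=
    hA.hasFDerivAt.comp x hasFDerivAt_fst
  show fderiv ℝ (fun x : E₁ × E₂ => (A x.1, (0 : E₂))) x v = _
  rw [(h1.prodMk (hasFDerivAt_const (0 : E₂) x)).fderiv]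
  rfl

lemma fderiv_liftVecF {V : E₂ → E₂} {x : E₁ × E₂} (hV : DifferentiableAt ℝ V x.2)
    (v : E₁ × E₂) :
    fderiv ℝ (liftVecF (E₁ := E₁) V) x v = (0, fderiv ℝ V x.2 v.2) := by
  have h1 : HasFDerivAt (fun y : E₁ × E₂ => V y.2) ((fderiv ℝ V x.2).comp (snd ℝ E₁ E₂)) x :=
    hV.hasFDerivAt.comp x hasFDerivAt_snd
  show fderiv ℝ (fun x : E₁ × E₂ => ((0 : E₁), V x.2)) x v = _
  rw [((hasFDerivAt_const (0 : E₁) x).prodMk h1).fderiv]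
  rfl

lemma fderiv_bilin_apply {E : Type*} [NormedAddCommGroup E] [NormedSpace ℝ E]
    {g : E → (E →L[ℝ] E →L[ℝ] ℝ)} {A C : E → E} {x : E}
    (hg : DifferentiableAt ℝ g x) (hA : DifferentiableAt ℝ A x) (hC : DifferentiableAt ℝ C x)
    (v : E) :
    fderiv ℝ (fun y => g y (A y) (C y)) x v
      = fderiv ℝ g x v (A x) (C x) + g x (fderiv ℝ A x v) (C x) + g x (A x) (fderiv ℝ C x v) := by
  have h1 : HasFDerivAt (fun y => g y (A y)) ((g x).comp (fderiv ℝ A x)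
      + (fderiv ℝ g x).flip (A x)) x := hg.hasFDerivAt.clm_apply hA.hasFDerivAt
  have h2 := h1.clm_apply hC.hasFDerivAt
  rw [h2.fderiv]
  simp
  ring

end Aux

section Aux2
open Filter ContinuousLinearMap
variable {E₁ E₂ : Type*} [NormedAddCommGroup E₁] [NormedSpace ℝ E₁]
  [NormedAddCommGroup E₂] [NormedSpace ℝ E₂]
variable {A C : E₁ → E₁} {U V : E₂ → E₂} {x : E₁ × E₂}

lemma lieB_liftB_liftB (hA : DifferentiableAt ℝ A x.1) (hC : DifferentiableAt ℝ C x.1) :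
    lieB (liftVecB (E₂ := E₂) A) (liftVecB C) x = liftVecB (lieB A C) x := by
  simp [lieB, fderiv_liftVecB hA, fderiv_liftVecB hC, liftVecB]

lemma lieB_liftB_liftF (hA : DifferentiableAt ℝ A x.1) (hV : DifferentiableAt ℝ V x.2) :
    lieB (liftVecB (E₂ := E₂) A) (liftVecF V) x = 0 := by
  simp [lieB, fderiv_liftVecB hA, fderiv_liftVecF hV, liftVecB, liftVecF, Prod.ext_iff]

lemma lieB_liftF_liftB (hA : DifferentiableAt ℝ A x.1) (hV : DifferentiableAt ℝ V x.2) :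
    lieB (liftVecF (E₁ := E₁) V) (liftVecB A) x = 0 := by
  simp [lieB, fderiv_liftVecB hA, fderiv_liftVecF hV, liftVecB, liftVecF, Prod.ext_iff]

lemma lieB_liftF_liftF (hU : DifferentiableAt ℝ U x.2) (hV : DifferentiableAt ℝ V x.2) :
    lieB (liftVecF (E₁ := E₁) U) (liftVecF V) x = liftVecF (lieB U V) x := by
  simp [lieB, fderiv_liftVecF hU, fderiv_liftVecF hV, liftVecF, Prod.ext_iff]

lemma lieB_const_right {E : Type*} [NormedAddCommGroup E] [NormedSpace ℝ E]
    (A : E → E) (ζ : E) (y : E) : lieB A (fun _ => ζ) y = -(fderiv ℝ A y ζ) := by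
  simp [lieB]

lemma lieB_const_left {E : Type*} [NormedAddCommGroup E] [NormedSpace ℝ E]
    (A : E → E) (ζ : E) (y : E) : lieB (fun _ => ζ) A y = fderiv ℝ A y ζ := by
  simp [lieB]

end Aux2

section Aux3
open Filter ContinuousLinearMap
variable {E₁ E₂ : Type*} [NormedAddCommGroup E₁] [NormedSpace ℝ E₁]
  [NormedAddCommGroup E₂] [NormedSpace ℝ E₂]
variable {gB : E₁ → (E₁ →L[ℝ] E₁ →L[ℝ] ℝ)} {gF : E₂ → (E₂ →L[ℝ] E₂ →L[ℝ] ℝ)}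
  {f : E₁ → ℝ} {A C : E₁ → E₁} {U V : E₂ → E₂} {x : E₁ × E₂} {ζ : E₁ × E₂}

lemma pair_BB : (fun y : E₁ × E₂ => warpedMetric gB gF f y (liftVecB A y) (liftVecB C y))
    = fun y => gB y.1 (A y.1) (C y.1) := by
  funext y; simp [warped_apply, liftVecB]

lemma pair_BF : (fun y : E₁ × E₂ => warpedMetric gB gF f y (liftVecB A y) (liftVecF U y))
    = fun _ => (0 : ℝ) := by
  funext y; simp [warped_apply, liftVecB, liftVecF]

lemma pair_FB : (fun y : E₁ × E₂ => warpedMetric gB gF f y (liftVecF U y) (liftVecB A y))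
    = fun _ => (0 : ℝ) := by
  funext y; simp [warped_apply, liftVecB, liftVecF]

lemma pair_FF : (fun y : E₁ × E₂ => warpedMetric gB gF f y (liftVecF U y) (liftVecF V y))
    = fun y => f y.1 * f y.1 * gF y.2 (U y.2) (V y.2) := by
  funext y; simp [warped_apply, liftVecF, pow_two]

lemma pair_Bc : (fun y : E₁ × E₂ => warpedMetric gB gF f y (liftVecB A y) ζ)
    = fun y => gB y.1 (A y.1) ζ.1 := by
  funext y; simp [warped_apply, liftVecB]

lemma pair_cB : (fun y : E₁ × E₂ => warpedMetric gB gF f y ζ (liftVecB A y))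
    = fun y => gB y.1 ζ.1 (A y.1) := by
  funext y; simp [warped_apply, liftVecB]

lemma pair_Fc : (fun y : E₁ × E₂ => warpedMetric gB gF f y (liftVecF U y) ζ)
    = fun y => f y.1 * f y.1 * gF y.2 (U y.2) ζ.2 := by
  funext y; simp [warped_apply, liftVecF, pow_two]

lemma pair_cF : (fun y : E₁ × E₂ => warpedMetric gB gF f y ζ (liftVecF U y))
    = fun y => f y.1 * f y.1 * gF y.2 ζ.2 (U y.2) := by
  funext y; simp [warped_apply, liftVecF, pow_two]

end Aux3

section Aux4
open Filter ContinuousLinearMap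
variable {E₁ E₂ : Type*} [NormedAddCommGroup E₁] [NormedSpace ℝ E₁]
  [NormedAddCommGroup E₂] [NormedSpace ℝ E₂]
variable {gB : E₁ → (E₁ →L[ℝ] E₁ →L[ℝ] ℝ)} {gF : E₂ → (E₂ →L[ℝ] E₂ →L[ℝ] ℝ)}
  {f : E₁ → ℝ} {A C : E₁ → E₁} {U V : E₂ → E₂} {x : E₁ × E₂} {ζ : E₁ × E₂}

/-- K1 : κ(base, base, fiber) = 0. -/
lemma koszul_BBF (hgB : DifferentiableAt ℝ gB x.1)
    (hA : DifferentiableAt ℝ A x.1) (hC : DifferentiableAt ℝ C x.1)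
    (hU : DifferentiableAt ℝ U x.2) :
    koszul (warpedMetric gB gF f) (liftVecB A) (liftVecB C) (liftVecF U) x = 0 := by
  unfold koszul
  rw [pair_BF, pair_FB, pair_BB, lieB_liftB_liftF hC hU, lieB_liftF_liftB hA hU,
    lieB_liftB_liftB hA hC,
    fderiv_comp_fst ((hgB.clm_apply hA).clm_apply hC)]
  simp [warped_apply, liftVecF, liftVecB]

lemma fderiv_mul_self_apply {f : E₁ → ℝ} {p : E₁} (hf : DifferentiableAt ℝ f p) (w : E₁) :
    fderiv ℝ (fun y => f y * f y) p w = 2 * (f p * fderiv ℝ f p w) := by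
  rw [HasFDerivAt.fderiv (f := fun y => f y * f y) (hf.hasFDerivAt.mul hf.hasFDerivAt)]; simp; ring

/-- K3 : κ(base, fiber, fiber). -/
lemma koszul_BFF (hgF : DifferentiableAt ℝ gF x.2) (hf : DifferentiableAt ℝ f x.1)
    (hA : DifferentiableAt ℝ A x.1)
    (hV : DifferentiableAt ℝ V x.2) (hU : DifferentiableAt ℝ U x.2) :
    koszul (warpedMetric gB gF f) (liftVecB A) (liftVecF V) (liftVecF U) x
      = f x.1 * fderiv ℝ f x.1 (A x.1) * gF x.2 (V x.2) (U x.2) := by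
  unfold koszul
  rw [pair_FF, pair_FB (U := U), pair_BF (U := V), lieB_liftF_liftF hV hU,
    lieB_liftF_liftB hA hU, lieB_liftB_liftF hA hV,
    fderiv_mul_fst_snd (φ := fun y => f y * f y) (hf.mul hf) ((hgF.clm_apply hV).clm_apply hU)]
  simp [warped_apply, liftVecF, liftVecB, fderiv_mul_self_apply hf]
  ring

/-- K4 : κ(fiber, base, fiber). -/
lemma koszul_FBF (hgF : DifferentiableAt ℝ gF x.2) (hf : DifferentiableAt ℝ f x.1)
    (hA : DifferentiableAt ℝ A x.1)
    (hV : DifferentiableAt ℝ V x.2) (hU : DifferentiableAt ℝ U x.2) :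
    koszul (warpedMetric gB gF f) (liftVecF V) (liftVecB A) (liftVecF U) x
      = f x.1 * fderiv ℝ f x.1 (A x.1) * gF x.2 (U x.2) (V x.2) := by
  unfold koszul
  rw [pair_BF (U := U), pair_FF (U := U), pair_FB (U := V), lieB_liftB_liftF hA hU,
    lieB_liftF_liftF hU hV, lieB_liftF_liftB hA hV,
    fderiv_mul_fst_snd (φ := fun y => f y * f y) (hf.mul hf) ((hgF.clm_apply hU).clm_apply hV)]
  simp [warped_apply, liftVecF, liftVecB, fderiv_mul_self_apply hf]
  ring

/-- Kc1₀ : κ(base, base, const (0,u)) = 0. -/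
lemma koszul_BBc0 (hgB : DifferentiableAt ℝ gB x.1)
    (hA : DifferentiableAt ℝ A x.1) (hC : DifferentiableAt ℝ C x.1) (u : E₂) :
    koszul (warpedMetric gB gF f) (liftVecB A) (liftVecB C) (fun _ => ((0 : E₁), u)) x
      = 0 := by
  unfold koszul
  rw [pair_Bc (A := C), pair_cB (A := A), pair_BB, lieB_const_right, lieB_const_left,
    lieB_liftB_liftB hA hC,
    fderiv_comp_fst ((hgB.clm_apply hA).clm_apply hC),
    fderiv_liftVecB hC, fderiv_liftVecB hA]
  simp [warped_apply, liftVecB]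

/-- Kc2 : κ(base, fiber, const ζ). -/
lemma koszul_BFc (hgB : DifferentiableAt ℝ gB x.1)
    (hgF : DifferentiableAt ℝ gF x.2) (hf : DifferentiableAt ℝ f x.1)
    (hA : DifferentiableAt ℝ A x.1) (hV : DifferentiableAt ℝ V x.2) (ζ : E₁ × E₂) :
    koszul (warpedMetric gB gF f) (liftVecB A) (liftVecF V) (fun _ => ζ) x
      = f x.1 * fderiv ℝ f x.1 (A x.1) * gF x.2 (V x.2) ζ.2 := by
  unfold koszul
  rw [pair_Fc, pair_cB (A := A), pair_BF (U := V), lieB_const_right, lieB_const_left,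
    lieB_liftB_liftF hA hV,
    fderiv_mul_fst_snd (φ := fun y => f y * f y) (hf.mul hf) ((hgF.clm_apply hV).clm_apply (differentiableAt_const ζ.2)),
    fderiv_comp_fst (φ := fun p => gB p ζ.1 (A p))
      (by exact (hgB.clm_apply (differentiableAt_const ζ.1)).clm_apply hA),
    fderiv_liftVecF hV, fderiv_liftVecB hA]
  simp [warped_apply, liftVecF, liftVecB, fderiv_mul_self_apply hf]
  ring

/-- Kc3 : κ(fiber, base, const ζ). -/
lemma koszul_FBc (hgB : DifferentiableAt ℝ gB x.1)
    (hgF : DifferentiableAt ℝ gF x.2) (hf : DifferentiableAt ℝ f x.1)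
    (hA : DifferentiableAt ℝ A x.1) (hV : DifferentiableAt ℝ V x.2) (ζ : E₁ × E₂) :
    koszul (warpedMetric gB gF f) (liftVecF V) (liftVecB A) (fun _ => ζ) x
      = f x.1 * fderiv ℝ f x.1 (A x.1) * gF x.2 ζ.2 (V x.2) := by
  unfold koszul
  rw [pair_Bc (A := A), pair_cF (U := V), pair_FB (U := V), lieB_const_right, lieB_const_left,
    lieB_liftF_liftB hA hV,
    fderiv_mul_fst_snd (φ := fun y => f y * f y) (hf.mul hf)
      ((hgF.clm_apply (differentiableAt_const ζ.2)).clm_apply hV),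
    fderiv_comp_fst (φ := fun p => gB p (A p) ζ.1)
      (by exact (hgB.clm_apply hA).clm_apply (differentiableAt_const ζ.1)),
    fderiv_liftVecF hV, fderiv_liftVecB hA]
  simp [warped_apply, liftVecF, liftVecB, fderiv_mul_self_apply hf]
  ring

/-- Kc4₀ : κ(fiber, fiber, const (0,u)). -/
lemma koszul_FFc0 (hgF : DifferentiableAt ℝ gF x.2) (hf : DifferentiableAt ℝ f x.1)
    (hV : DifferentiableAt ℝ V x.2) (hU : DifferentiableAt ℝ U x.2) (u : E₂) :
    koszul (warpedMetric gB gF f) (liftVecF V) (liftVecF U) (fun _ => ((0 : E₁), u)) x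
      = f x.1 * f x.1 * ((1 / 2) * (
          (fderiv ℝ gF x.2 (V x.2) (U x.2) u + gF x.2 (fderiv ℝ U x.2 (V x.2)) u)
        + (fderiv ℝ gF x.2 (U x.2) u (V x.2) + gF x.2 u (fderiv ℝ V x.2 (U x.2)))
        - (fderiv ℝ gF x.2 u (V x.2) (U x.2) + gF x.2 (fderiv ℝ V x.2 u) (U x.2)
            + gF x.2 (V x.2) (fderiv ℝ U x.2 u))
        + gF x.2 (V x.2) (fderiv ℝ U x.2 u)
        + gF x.2 (U x.2) (fderiv ℝ V x.2 u)
        + gF x.2 u (fderiv ℝ U x.2 (V x.2) - fderiv ℝ V x.2 (U x.2)))) := by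
  unfold koszul
  rw [pair_Fc (U := U), pair_cF (U := V), pair_FF (U := V) (V := U),
    lieB_const_right, lieB_const_left, lieB_liftF_liftF hV hU,
    fderiv_mul_fst_snd (φ := fun y => f y * f y) (hf.mul hf)
      ((hgF.clm_apply hU).clm_apply (differentiableAt_const ((0:E₁), u).2)),
    fderiv_mul_fst_snd (φ := fun y => f y * f y) (hf.mul hf)
      ((hgF.clm_apply (differentiableAt_const ((0:E₁), u).2)).clm_apply hV),
    fderiv_mul_fst_snd (φ := fun y => f y * f y) (hf.mul hf) ((hgF.clm_apply hV).clm_apply hU),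
    fderiv_liftVecF hU, fderiv_liftVecF hV,
    fderiv_bilin_apply hgF hU (differentiableAt_const ((0:E₁), u).2),
    fderiv_bilin_apply hgF (differentiableAt_const ((0:E₁), u).2) hV,
    fderiv_bilin_apply hgF hV hU]
  simp [warped_apply, liftVecF, liftVecB, lieB, fderiv_mul_self_apply hf]
  ring

end Aux4

section Aux5
open Filter ContinuousLinearMap
variable {E : Type*} [NormedAddCommGroup E] [NormedSpace ℝ E]

lemma koszul_congr {g : E → (E →L[ℝ] E →L[ℝ] ℝ)} {X X' Y Y' Z Z' : E → E} {x : E}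
    (hX : X =ᶠ[nhds x] X') (hY : Y =ᶠ[nhds x] Y') (hZ : Z =ᶠ[nhds x] Z') :
    koszul g X Y Z x = koszul g X' Y' Z' x := by
  have eX : X x = X' x := hX.eq_of_nhds
  have eY : Y x = Y' x := hY.eq_of_nhds
  have eZ : Z x = Z' x := hZ.eq_of_nhds
  have p1 : (fun y => g y (Y y) (Z y)) =ᶠ[nhds x] fun y => g y (Y' y) (Z' y) :=
    hY.mp (hZ.mono fun y h2 h1 => by simp only [h1, h2])
  have p2 : (fun y => g y (Z y) (X y)) =ᶠ[nhds x] fun y => g y (Z' y) (X' y) :=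
    hZ.mp (hX.mono fun y h2 h1 => by simp only [h1, h2])
  have p3 : (fun y => g y (X y) (Y y)) =ᶠ[nhds x] fun y => g y (X' y) (Y' y) :=
    hX.mp (hY.mono fun y h2 h1 => by simp only [h1, h2])
  have l1 : lieB Y Z x = lieB Y' Z' x := by
    unfold lieB; rw [hY.fderiv_eq, hZ.fderiv_eq, eY, eZ]
  have l2 : lieB Z X x = lieB Z' X' x := by
    unfold lieB; rw [hZ.fderiv_eq, hX.fderiv_eq, eX, eZ]
  have l3 : lieB X Y x = lieB X' Y' x := by
    unfold lieB; rw [hY.fderiv_eq, hX.fderiv_eq, eX, eY]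
  unfold koszul
  rw [p1.fderiv_eq, p2.fderiv_eq, p3.fderiv_eq, l1, l2, l3, eX, eY, eZ]

lemma diffAt_of_cd {G : Type*} [NormedAddCommGroup G] [NormedSpace ℝ G]
    {A : E → G} {s : Set E} (hs : IsOpen s) (hA : ContDiffOn ℝ (⊤ : ℕ∞) A s)
    {y : E} (hy : y ∈ s) : DifferentiableAt ℝ A y :=
  (hA.contDiffAt (hs.mem_nhds hy)).differentiableAt (by simp)

lemma fderiv_diffAt_of_cd {G : Type*} [NormedAddCommGroup G] [NormedSpace ℝ G]
    {A : E → G} {s : Set E} (hs : IsOpen s) (hA : ContDiffOn ℝ (⊤ : ℕ∞) A s)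
    {y : E} (hy : y ∈ s) : DifferentiableAt ℝ (fderiv ℝ A) y := by
  have h := (hA.contDiffAt (hs.mem_nhds hy)).fderiv_right (m := (⊤ : ℕ∞)) (by exact_mod_cast le_top)
  exact h.differentiableAt (by simp)

lemma lieB_diffAt {X Y : E → E} {s : Set E} (hs : IsOpen s)
    (hX : ContDiffOn ℝ (⊤ : ℕ∞) X s) (hY : ContDiffOn ℝ (⊤ : ℕ∞) Y s)
    {y : E} (hy : y ∈ s) : DifferentiableAt ℝ (lieB X Y) y := by
  exact ((fderiv_diffAt_of_cd hs hY hy).clm_apply (diffAt_of_cd hs hX hy)).sub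
    ((fderiv_diffAt_of_cd hs hX hy).clm_apply (diffAt_of_cd hs hY hy))

lemma fderiv_metric_symm {g : E → (E →L[ℝ] E →L[ℝ] ℝ)} {s : Set E} (hs : IsOpen s)
    (hsym : ∀ p ∈ s, ∀ u v, g p u v = g p v u) {q : E} (hg : DifferentiableAt ℝ g q)
    (hq : q ∈ s) (w a b : E) : fderiv ℝ g q w a b = fderiv ℝ g q w b a := by
  have h : (fun y => g y ((fun _ => a) y) ((fun _ => b) y))
      =ᶠ[nhds q] (fun y => g y ((fun _ => b) y) ((fun _ => a) y)) :=
    eventually_of_mem (hs.mem_nhds hq) fun y hy => hsym y hy a b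
  have e1 := fderiv_bilin_apply (A := fun _ => a) (C := fun _ => b) hg
    (differentiableAt_const a) (differentiableAt_const b) w
  have e2 := fderiv_bilin_apply (A := fun _ => b) (C := fun _ => a) hg
    (differentiableAt_const b) (differentiableAt_const a) w
  rw [h.fderiv_eq] at e1
  simp at e1 e2
  rw [← e1, ← e2]

end Aux5

set_option maxHeartbeats 2000000 in

/-- For a semi-regular warped product, the mixed components
`R(X̃,Ỹ,Z̃,Q̃)`, `R(X̃,Ỹ,W̃,Q̃)` and `R(Ũ,Ṽ,Z̃,Q̃)` of the Riemann curvature vanish. -/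
theorem warpedProduct_riemann_mixed_vanish
    {E₁ E₂ : Type*} [NormedAddCommGroup E₁] [NormedSpace ℝ E₁] [FiniteDimensional ℝ E₁]
    [NormedAddCommGroup E₂] [NormedSpace ℝ E₂] [FiniteDimensional ℝ E₂]
    (B : Set E₁) (F : Set E₂) (hB : IsOpen B) (hF : IsOpen F)
    (gB : E₁ → (E₁ →L[ℝ] E₁ →L[ℝ] ℝ)) (gF : E₂ → (E₂ →L[ℝ] E₂ →L[ℝ] ℝ))
    (hgB : IsSingularMetric B gB) (hgF : IsSingularMetric F gF)
    (hsB : SemiRegular B gB) (hsF : SemiRegular F gF)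
    (f : E₁ → ℝ) (hf : ContDiffOn ℝ (⊤ : ℕ∞) f B)
    (hdf : DiffInOmega1s B gB f)
    (X Y Z : E₁ → E₁) (U V W Q : E₂ → E₂)
    (hX : ContDiffOn ℝ (⊤ : ℕ∞) X B) (hY : ContDiffOn ℝ (⊤ : ℕ∞) Y B)
    (hZ : ContDiffOn ℝ (⊤ : ℕ∞) Z B)
    (hU : ContDiffOn ℝ (⊤ : ℕ∞) U F) (hV : ContDiffOn ℝ (⊤ : ℕ∞) V F)
    (hW : ContDiffOn ℝ (⊤ : ℕ∞) W F) (hQ : ContDiffOn ℝ (⊤ : ℕ∞) Q F) :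
    ∀ p ∈ B, ∀ q ∈ F,
      (∀ w₁ w₂ w₃ w₄ : E₁ × E₂,
        KoszulWitness (B ×ˢ F) (warpedMetric gB gF f) (liftVecB X) (liftVecB Z) (p, q) w₁ →
        KoszulWitness (B ×ˢ F) (warpedMetric gB gF f) (liftVecB Y) (liftVecF Q) (p, q) w₂ →
        KoszulWitness (B ×ˢ F) (warpedMetric gB gF f) (liftVecB Y) (liftVecB Z) (p, q) w₃ →
        KoszulWitness (B ×ˢ F) (warpedMetric gB gF f) (liftVecB X) (liftVecF Q) (p, q) w₄ →
        riemannExpr (warpedMetric gB gF f) (liftVecB X) (liftVecB Y) (liftVecB Z)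
          (liftVecF Q) (p, q) w₁ w₂ w₃ w₄ = 0) ∧
      (∀ w₁ w₂ w₃ w₄ : E₁ × E₂,
        KoszulWitness (B ×ˢ F) (warpedMetric gB gF f) (liftVecB X) (liftVecF W) (p, q) w₁ →
        KoszulWitness (B ×ˢ F) (warpedMetric gB gF f) (liftVecB Y) (liftVecF Q) (p, q) w₂ →
        KoszulWitness (B ×ˢ F) (warpedMetric gB gF f) (liftVecB Y) (liftVecF W) (p, q) w₃ →
        KoszulWitness (B ×ˢ F) (warpedMetric gB gF f) (liftVecB X) (liftVecF Q) (p, q) w₄ →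
        riemannExpr (warpedMetric gB gF f) (liftVecB X) (liftVecB Y) (liftVecF W)
          (liftVecF Q) (p, q) w₁ w₂ w₃ w₄ = 0) ∧
      (∀ w₁ w₂ w₃ w₄ : E₁ × E₂,
        KoszulWitness (B ×ˢ F) (warpedMetric gB gF f) (liftVecF U) (liftVecB Z) (p, q) w₁ →
        KoszulWitness (B ×ˢ F) (warpedMetric gB gF f) (liftVecF V) (liftVecF Q) (p, q) w₂ →
        KoszulWitness (B ×ˢ F) (warpedMetric gB gF f) (liftVecF V) (liftVecB Z) (p, q) w₃ →
        KoszulWitness (B ×ˢ F) (warpedMetric gB gF f) (liftVecF U) (liftVecF Q) (p, q) w₄ →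
        riemannExpr (warpedMetric gB gF f) (liftVecF U) (liftVecF V) (liftVecB Z)
          (liftVecF Q) (p, q) w₁ w₂ w₃ w₄ = 0) := by
  intro p hp q hq
  have hopen : IsOpen (B ×ˢ F) := hB.prod hF
  have hmem : ((p, q) : E₁ × E₂) ∈ B ×ˢ F := ⟨hp, hq⟩
  have hnb : (B ×ˢ F) ∈ nhds ((p, q) : E₁ × E₂) := hopen.mem_nhds hmem
  have dgB : ∀ y ∈ B, DifferentiableAt ℝ gB y := fun y hy => diffAt_of_cd hB hgB.1 hy
  have dgF : ∀ y ∈ F, DifferentiableAt ℝ gF y := fun y hy => diffAt_of_cd hF hgF.1 hy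
  have dfB : ∀ y ∈ B, DifferentiableAt ℝ f y := fun y hy => diffAt_of_cd hB hf hy
  have dX : ∀ y ∈ B, DifferentiableAt ℝ X y := fun y hy => diffAt_of_cd hB hX hy
  have dY : ∀ y ∈ B, DifferentiableAt ℝ Y y := fun y hy => diffAt_of_cd hB hY hy
  have dZ : ∀ y ∈ B, DifferentiableAt ℝ Z y := fun y hy => diffAt_of_cd hB hZ hy
  have dU : ∀ y ∈ F, DifferentiableAt ℝ U y := fun y hy => diffAt_of_cd hF hU hy
  have dV : ∀ y ∈ F, DifferentiableAt ℝ V y := fun y hy => diffAt_of_cd hF hV hy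
  have dW : ∀ y ∈ F, DifferentiableAt ℝ W y := fun y hy => diffAt_of_cd hF hW hy
  have dQ : ∀ y ∈ F, DifferentiableAt ℝ Q y := fun y hy => diffAt_of_cd hF hQ hy
  refine ⟨?_, ?_, ?_⟩
  · -- Part 1 : R(X̃,Ỹ,Z̃,Q̃) = 0
    intro w₁ w₂ w₃ w₄ hw₁ hw₂ hw₃ hw₄
    have hbr : lieB (liftVecB X) (liftVecB Y) =ᶠ[nhds ((p, q) : E₁ × E₂)]
        liftVecB (lieB X Y) :=
      Filter.eventually_of_mem hnb fun y hy => lieB_liftB_liftB (dX _ hy.1) (dY _ hy.1)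
    have t1 : fderiv ℝ (koszul (warpedMetric gB gF f) (liftVecB Y) (liftVecB Z)
        (liftVecF Q)) ((p, q) : E₁ × E₂) = 0 := by
      have h : koszul (warpedMetric gB gF f) (liftVecB Y) (liftVecB Z) (liftVecF Q)
          =ᶠ[nhds ((p, q) : E₁ × E₂)] (fun _ => (0 : ℝ)) :=
        Filter.eventually_of_mem hnb fun y hy =>
          koszul_BBF (dgB _ hy.1) (dY _ hy.1) (dZ _ hy.1) (dQ _ hy.2)
      rw [h.fderiv_eq]; simp
    have t2 : fderiv ℝ (koszul (warpedMetric gB gF f) (liftVecB X) (liftVecB Z)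
        (liftVecF Q)) ((p, q) : E₁ × E₂) = 0 := by
      have h : koszul (warpedMetric gB gF f) (liftVecB X) (liftVecB Z) (liftVecF Q)
          =ᶠ[nhds ((p, q) : E₁ × E₂)] (fun _ => (0 : ℝ)) :=
        Filter.eventually_of_mem hnb fun y hy =>
          koszul_BBF (dgB _ hy.1) (dX _ hy.1) (dZ _ hy.1) (dQ _ hy.2)
      rw [h.fderiv_eq]; simp
    have t3 : koszul (warpedMetric gB gF f) (lieB (liftVecB X) (liftVecB Y))
        (liftVecB Z) (liftVecF Q) ((p, q) : E₁ × E₂) = 0 := by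
      rw [koszul_congr hbr Filter.EventuallyEq.rfl Filter.EventuallyEq.rfl]
      exact koszul_BBF (dgB _ hp) (lieB_diffAt hB hX hY hp) (dZ _ hp) (dQ _ hq)
    have hw1z : ∀ u : E₂, f p ^ 2 * gF q w₁.2 u = 0 := by
      intro u
      have h := hw₁ (fun _ => ((0 : E₁), u)) contDiffOn_const
      rw [koszul_BBc0 (dgB _ hp) (dX _ hp) (dZ _ hp)] at h
      simpa [warped_apply] using h.symm
    have hw3z : ∀ u : E₂, f p ^ 2 * gF q w₃.2 u = 0 := by
      intro u
      have h := hw₃ (fun _ => ((0 : E₁), u)) contDiffOn_const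
      rw [koszul_BBc0 (dgB _ hp) (dY _ hp) (dZ _ hp)] at h
      simpa [warped_apply] using h.symm
    have hv2 : warpedMetric gB gF f ((p, q) : E₁ × E₂) w₂ w₁
        = f p * fderiv ℝ f p (Y p) * gF q (Q q) w₁.2 := by
      have h := hw₂ (fun _ => w₁) contDiffOn_const
      rw [koszul_BFc (dgB _ hp) (dgF _ hq) (dfB _ hp) (dY _ hp) (dQ _ hq)] at h
      exact h.symm
    have hv4 : warpedMetric gB gF f ((p, q) : E₁ × E₂) w₄ w₃
        = f p * fderiv ℝ f p (X p) * gF q (Q q) w₃.2 := by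
      have h := hw₄ (fun _ => w₃) contDiffOn_const
      rw [koszul_BFc (dgB _ hp) (dgF _ hq) (dfB _ hp) (dX _ hp) (dQ _ hq)] at h
      exact h.symm
    have hsym12 : warpedMetric gB gF f ((p, q) : E₁ × E₂) w₁ w₂
        = warpedMetric gB gF f ((p, q) : E₁ × E₂) w₂ w₁ := by
      simp [warped_apply, hgB.2 p hp w₁.1 w₂.1, hgF.2 q hq w₁.2 w₂.2]
    have hsym34 : warpedMetric gB gF f ((p, q) : E₁ × E₂) w₃ w₄
        = warpedMetric gB gF f ((p, q) : E₁ × E₂) w₄ w₃ := by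
      simp [warped_apply, hgB.2 p hp w₃.1 w₄.1, hgF.2 q hq w₃.2 w₄.2]
    have hS4 : warpedMetric gB gF f ((p, q) : E₁ × E₂) w₁ w₂ = 0 := by
      rcases eq_or_ne (f p) 0 with hc | hc
      · rw [hsym12, hv2, hc]; ring
      · have h0 : gF q w₁.2 (Q q) = 0 :=
          (mul_eq_zero.mp (hw1z (Q q))).resolve_left (pow_ne_zero 2 hc)
        rw [hsym12, hv2, hgF.2 q hq (Q q) w₁.2, h0]; ring
    have hS5 : warpedMetric gB gF f ((p, q) : E₁ × E₂) w₃ w₄ = 0 := by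
      rcases eq_or_ne (f p) 0 with hc | hc
      · rw [hsym34, hv4, hc]; ring
      · have h0 : gF q w₃.2 (Q q) = 0 :=
          (mul_eq_zero.mp (hw3z (Q q))).resolve_left (pow_ne_zero 2 hc)
        rw [hsym34, hv4, hgF.2 q hq (Q q) w₃.2, h0]; ring
    unfold riemannExpr
    rw [t1, t2, t3, hS4, hS5]
    simp
  · -- Part 2
    intro w₁ w₂ w₃ w₄ hw₁ hw₂ hw₃ hw₄
    have dffp : DifferentiableAt ℝ (fderiv ℝ f) p := fderiv_diffAt_of_cd hB hf hp
    have hbr : lieB (liftVecB X) (liftVecB Y) =ᶠ[nhds ((p, q) : E₁ × E₂)]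
        liftVecB (lieB X Y) :=
      Filter.eventually_of_mem hnb fun y hy => lieB_liftB_liftB (dX _ hy.1) (dY _ hy.1)
    have hφd : ∀ (A : E₁ → E₁), ContDiffOn ℝ (⊤ : ℕ∞) A B →
        DifferentiableAt ℝ (fun p' => f p' * fderiv ℝ f p' (A p')) p :=
      fun A hA => (dfB _ hp).mul (dffp.clm_apply (diffAt_of_cd hB hA hp))
    have hψd : DifferentiableAt ℝ (fun q' => gF q' (W q') (Q q')) q :=
      ((dgF _ hq).clm_apply (dW _ hq)).clm_apply (dQ _ hq)
    have t1 : fderiv ℝ (koszul (warpedMetric gB gF f) (liftVecB Y) (liftVecF W)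
        (liftVecF Q)) ((p, q) : E₁ × E₂) (liftVecB X (p, q))
        = fderiv ℝ (fun p' => f p' * fderiv ℝ f p' (Y p')) p (X p) * gF q (W q) (Q q) := by
      have h : koszul (warpedMetric gB gF f) (liftVecB Y) (liftVecF W) (liftVecF Q)
          =ᶠ[nhds ((p, q) : E₁ × E₂)]
          (fun y => f y.1 * fderiv ℝ f y.1 (Y y.1) * gF y.2 (W y.2) (Q y.2)) :=
        Filter.eventually_of_mem hnb fun y hy =>
          koszul_BFF (dgF _ hy.2) (dfB _ hy.1) (dY _ hy.1) (dW _ hy.2) (dQ _ hy.2)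
      rw [h.fderiv_eq, fderiv_mul_fst_snd (φ := fun p' => f p' * fderiv ℝ f p' (Y p'))
        (ψ := fun q' => gF q' (W q') (Q q')) (hφd Y hY) hψd]
      simp [liftVecB]
    have t2 : fderiv ℝ (koszul (warpedMetric gB gF f) (liftVecB X) (liftVecF W)
        (liftVecF Q)) ((p, q) : E₁ × E₂) (liftVecB Y (p, q))
        = fderiv ℝ (fun p' => f p' * fderiv ℝ f p' (X p')) p (Y p) * gF q (W q) (Q q) := by
      have h : koszul (warpedMetric gB gF f) (liftVecB X) (liftVecF W) (liftVecF Q)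
          =ᶠ[nhds ((p, q) : E₁ × E₂)]
          (fun y => f y.1 * fderiv ℝ f y.1 (X y.1) * gF y.2 (W y.2) (Q y.2)) :=
        Filter.eventually_of_mem hnb fun y hy =>
          koszul_BFF (dgF _ hy.2) (dfB _ hy.1) (dX _ hy.1) (dW _ hy.2) (dQ _ hy.2)
      rw [h.fderiv_eq, fderiv_mul_fst_snd (φ := fun p' => f p' * fderiv ℝ f p' (X p'))
        (ψ := fun q' => gF q' (W q') (Q q')) (hφd X hX) hψd]
      simp [liftVecB]
    have t3 : koszul (warpedMetric gB gF f) (lieB (liftVecB X) (liftVecB Y))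
        (liftVecF W) (liftVecF Q) ((p, q) : E₁ × E₂)
        = f p * fderiv ℝ f p (lieB X Y p) * gF q (W q) (Q q) := by
      rw [koszul_congr hbr Filter.EventuallyEq.rfl Filter.EventuallyEq.rfl]
      exact koszul_BFF (dgF _ hq) (dfB _ hp) (lieB_diffAt hB hX hY hp) (dW _ hq) (dQ _ hq)
    have hXYf : fderiv ℝ (fun p' => f p' * fderiv ℝ f p' (Y p')) p (X p)
        = fderiv ℝ f p (X p) * fderiv ℝ f p (Y p)
          + f p * (fderiv ℝ f p (fderiv ℝ Y p (X p))
            + fderiv ℝ (fderiv ℝ f) p (X p) (Y p)) := by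
      rw [HasFDerivAt.fderiv (f := fun p' => f p' * fderiv ℝ f p' (Y p')) ((dfB _ hp).hasFDerivAt.mul
        (dffp.hasFDerivAt.clm_apply (dY _ hp).hasFDerivAt))]
      simp; ring
    have hYXf : fderiv ℝ (fun p' => f p' * fderiv ℝ f p' (X p')) p (Y p)
        = fderiv ℝ f p (Y p) * fderiv ℝ f p (X p)
          + f p * (fderiv ℝ f p (fderiv ℝ X p (Y p))
            + fderiv ℝ (fderiv ℝ f) p (Y p) (X p)) := by
      rw [HasFDerivAt.fderiv (f := fun p' => f p' * fderiv ℝ f p' (X p')) ((dfB _ hp).hasFDerivAt.mul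
        (dffp.hasFDerivAt.clm_apply (dX _ hp).hasFDerivAt))]
      simp; ring
    have hSchwarz : fderiv ℝ (fderiv ℝ f) p (X p) (Y p)
        = fderiv ℝ (fderiv ℝ f) p (Y p) (X p) := by
      have hev : ∀ᶠ y in nhds p, HasFDerivAt f (fderiv ℝ f y) y :=
        Filter.eventually_of_mem (hB.mem_nhds hp) fun y hy => (dfB _ hy).hasFDerivAt
      exact second_derivative_symmetric_of_eventually hev dffp.hasFDerivAt (X p) (Y p)
    have hlie : fderiv ℝ f p (lieB X Y p)
        = fderiv ℝ f p (fderiv ℝ Y p (X p)) - fderiv ℝ f p (fderiv ℝ X p (Y p)) := by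
      simp [lieB]
    have hS4 : warpedMetric gB gF f ((p, q) : E₁ × E₂) w₁ w₂
        = f p * fderiv ℝ f p (X p) * gF q (W q) w₂.2 := by
      have h := hw₁ (fun _ => w₂) contDiffOn_const
      rw [koszul_BFc (dgB _ hp) (dgF _ hq) (dfB _ hp) (dX _ hp) (dW _ hq)] at h
      exact h.symm
    have hS5 : warpedMetric gB gF f ((p, q) : E₁ × E₂) w₃ w₄
        = f p * fderiv ℝ f p (Y p) * gF q (W q) w₄.2 := by
      have h := hw₃ (fun _ => w₄) contDiffOn_const
      rw [koszul_BFc (dgB _ hp) (dgF _ hq) (dfB _ hp) (dY _ hp) (dW _ hq)] at h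
      exact h.symm
    have h2T : ∀ u : E₂, f p ^ 2 * gF q w₂.2 u
        = f p * fderiv ℝ f p (Y p) * gF q (Q q) u := by
      intro u
      have h := hw₂ (fun _ => ((0 : E₁), u)) contDiffOn_const
      rw [koszul_BFc (dgB _ hp) (dgF _ hq) (dfB _ hp) (dY _ hp) (dQ _ hq)] at h
      simpa [warped_apply] using h.symm
    have h4T : ∀ u : E₂, f p ^ 2 * gF q w₄.2 u
        = f p * fderiv ℝ f p (X p) * gF q (Q q) u := by
      intro u
      have h := hw₄ (fun _ => ((0 : E₁), u)) contDiffOn_const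
      rw [koszul_BFc (dgB _ hp) (dgF _ hq) (dfB _ hp) (dX _ hp) (dQ _ hq)] at h
      simpa [warped_apply] using h.symm
    rcases eq_or_ne (f p) 0 with hc | hc
    · unfold riemannExpr
      rw [t1, t2, t3, hXYf, hYXf, hS4, hS5, hc]
      ring
    · have h24 : warpedMetric gB gF f ((p, q) : E₁ × E₂) w₁ w₂
          = fderiv ℝ f p (X p) * fderiv ℝ f p (Y p) * gF q (Q q) (W q) := by
        apply mul_left_cancel₀ hc
        rw [hS4, hgF.2 q hq (W q) w₂.2]
        linear_combination (fderiv ℝ f p (X p)) * h2T (W q)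
      have h25 : warpedMetric gB gF f ((p, q) : E₁ × E₂) w₃ w₄
          = fderiv ℝ f p (Y p) * fderiv ℝ f p (X p) * gF q (Q q) (W q) := by
        apply mul_left_cancel₀ hc
        rw [hS5, hgF.2 q hq (W q) w₄.2]
        linear_combination (fderiv ℝ f p (Y p)) * h4T (W q)
      unfold riemannExpr
      rw [t1, t2, t3, hXYf, hYXf, h24, h25, hSchwarz, hlie]
      ring
  · -- Part 3
    intro w₁ w₂ w₃ w₄ hw₁ hw₂ hw₃ hw₄
    have dffp : DifferentiableAt ℝ (fderiv ℝ f) p := fderiv_diffAt_of_cd hB hf hp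
    have hbrF : lieB (liftVecF U) (liftVecF V) =ᶠ[nhds ((p, q) : E₁ × E₂)]
        liftVecF (lieB U V) :=
      Filter.eventually_of_mem hnb fun y hy => lieB_liftF_liftF (dU _ hy.2) (dV _ hy.2)
    have hφZ : DifferentiableAt ℝ (fun p' => f p' * fderiv ℝ f p' (Z p')) p :=
      (dfB _ hp).mul (dffp.clm_apply (dZ _ hp))
    have hψQV : DifferentiableAt ℝ (fun q' => gF q' (Q q') (V q')) q :=
      ((dgF _ hq).clm_apply (dQ _ hq)).clm_apply (dV _ hq)
    have hψQU : DifferentiableAt ℝ (fun q' => gF q' (Q q') (U q')) q :=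
      ((dgF _ hq).clm_apply (dQ _ hq)).clm_apply (dU _ hq)
    have hev1 : koszul (warpedMetric gB gF f) (liftVecF V) (liftVecB Z) (liftVecF Q)
        =ᶠ[nhds ((p, q) : E₁ × E₂)]
        (fun y => f y.1 * fderiv ℝ f y.1 (Z y.1) * gF y.2 (Q y.2) (V y.2)) :=
      Filter.eventually_of_mem hnb fun y hy =>
        koszul_FBF (dgF _ hy.2) (dfB _ hy.1) (dZ _ hy.1) (dV _ hy.2) (dQ _ hy.2)
    have hev2 : koszul (warpedMetric gB gF f) (liftVecF U) (liftVecB Z) (liftVecF Q)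
        =ᶠ[nhds ((p, q) : E₁ × E₂)]
        (fun y => f y.1 * fderiv ℝ f y.1 (Z y.1) * gF y.2 (Q y.2) (U y.2)) :=
      Filter.eventually_of_mem hnb fun y hy =>
        koszul_FBF (dgF _ hy.2) (dfB _ hy.1) (dZ _ hy.1) (dU _ hy.2) (dQ _ hy.2)
    have t3 : koszul (warpedMetric gB gF f) (lieB (liftVecF U) (liftVecF V))
        (liftVecB Z) (liftVecF Q) ((p, q) : E₁ × E₂)
        = f p * fderiv ℝ f p (Z p) * gF q (Q q) (lieB U V q) := by
      rw [koszul_congr hbrF Filter.EventuallyEq.rfl Filter.EventuallyEq.rfl]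
      exact koszul_FBF (dgF _ hq) (dfB _ hp) (dZ _ hp) (lieB_diffAt hF hU hV hq) (dQ _ hq)
    have hS4 : warpedMetric gB gF f ((p, q) : E₁ × E₂) w₁ w₂
        = f p * fderiv ℝ f p (Z p) * gF q w₂.2 (U q) := by
      have h := hw₁ (fun _ => w₂) contDiffOn_const
      rw [koszul_FBc (dgB _ hp) (dgF _ hq) (dfB _ hp) (dZ _ hp) (dU _ hq)] at h
      exact h.symm
    have hS5 : warpedMetric gB gF f ((p, q) : E₁ × E₂) w₃ w₄
        = f p * fderiv ℝ f p (Z p) * gF q w₄.2 (V q) := by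
      have h := hw₃ (fun _ => w₄) contDiffOn_const
      rw [koszul_FBc (dgB _ hp) (dgF _ hq) (dfB _ hp) (dZ _ hp) (dV _ hq)] at h
      exact h.symm
    have h2 := hw₂ (fun _ => ((0 : E₁), U q)) contDiffOn_const
    rw [koszul_FFc0 (dgF _ hq) (dfB _ hp) (dV _ hq) (dQ _ hq)] at h2
    have h2' : warpedMetric gB gF f ((p, q) : E₁ × E₂) ((0 : E₁), U q) =
        warpedMetric gB gF f ((p, q) : E₁ × E₂) ((0 : E₁), U q) := rfl
    have h2w : warpedMetric gB gF f ((p, q) : E₁ × E₂) w₂ ((0 : E₁), U q)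
        = f p ^ 2 * gF q w₂.2 (U q) := by simp [warped_apply]
    have h2T := h2.trans h2w
    have h4 := hw₄ (fun _ => ((0 : E₁), V q)) contDiffOn_const
    rw [koszul_FFc0 (dgF _ hq) (dfB _ hp) (dU _ hq) (dQ _ hq)] at h4
    have h4w : warpedMetric gB gF f ((p, q) : E₁ × E₂) w₄ ((0 : E₁), V q)
        = f p ^ 2 * gF q w₄.2 (V q) := by simp [warped_apply]
    have h4T := h4.trans h4w
    have hG : ∀ a b : E₂, gF q a b = gF q b a := hgF.2 q hq
    have hD : ∀ w a b : E₂, fderiv ℝ gF q w a b = fderiv ℝ gF q w b a :=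
      fderiv_metric_symm hF hgF.2 (dgF _ hq) hq
    unfold riemannExpr
    rw [hev1.fderiv_eq, hev2.fderiv_eq, t3, hS4, hS5,
      fderiv_mul_fst_snd (φ := fun p' => f p' * fderiv ℝ f p' (Z p'))
        (ψ := fun q' => gF q' (Q q') (V q')) hφZ hψQV,
      fderiv_mul_fst_snd (φ := fun p' => f p' * fderiv ℝ f p' (Z p'))
        (ψ := fun q' => gF q' (Q q') (U q')) hφZ hψQU]
    simp only [liftVecF, ContinuousLinearMap.map_zero, zero_mul, add_zero, zero_add, mul_zero]
    rw [fderiv_bilin_apply (g := gF) (A := Q) (C := V) (x := q) (dgF _ hq) (dQ _ hq) (dV _ hq),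
      fderiv_bilin_apply (g := gF) (A := Q) (C := U) (x := q) (dgF _ hq) (dQ _ hq) (dU _ hq)]
    simp only [lieB, map_sub] at h2T h4T ⊢
    rcases eq_or_ne (f p) 0 with hc | hc
    · rw [hc]; ring
    · apply mul_left_cancel₀ hc
      linear_combination (-(fderiv ℝ f p (Z p))) * h2T + (fderiv ℝ f p (Z p)) * h4T
        + (f p * f p * fderiv ℝ f p (Z p) / 2) *
          (hD (U q) (Q q) (V q) - hD (V q) (Q q) (U q) + hD (Q q) (U q) (V q)
            + hG (fderiv ℝ Q q (U q)) (V q) - hG (fderiv ℝ Q q (V q)) (U q)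
            - hG (fderiv ℝ V q (U q)) (Q q) + hG (fderiv ℝ U q (V q)) (Q q))

end
end
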